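/- Let k ≥ 0, let n, m be nonnegative integers, and let ε be an integer with 0 ≤ ε ≤ δ_k(n+m). Then ∂_k(n) ≤ m − ε if and only if n ≤ ∂^k(n+m). -/

import Mathlib

/-- Fold a function `g` over the terms `(a_t, t)` of the unique Macaulay-type
representation `n = C(a_{k+1}, k+1) + ⋯ + C(a_i, i)` with
`a_{k+1} > ⋯ > a_i ≥ i ≥ 1`, computed greedily: at each level `t` (from `k+1`
down), `a_t` is the largest `a` with `C(a, t) ≤` the current remainder. -/
def macRepFold (g : ℕ → ℕ → ℕ) : ℕ → ℕ → ℕ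
  | 0, _ => 0
  | t + 1, n =>
    if n = 0 then 0
    else
      let a := Nat.findGreatest (fun a => Nat.choose a (t + 1) ≤ n) (n + t + 1)
      g a (t + 1) + macRepFold g t (n - Nat.choose a (t + 1))

lemma mrf_zero (g : ℕ → ℕ → ℕ) (s : ℕ) : macRepFold g s 0 = 0 := by
  cases s <;> simp [macRepFold]

lemma choose_lb (m u : ℕ) : m + 1 ≤ (m + (u + 1)).choose (u + 1) := by
  induction m with
  | zero => simp
  | succ m ih =>
    have h : (m + 1 + (u + 1)) = (m + (u + 1)) + 1 := by omega
    rw [h, Nat.choose_succ_succ']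
    have hp : 0 < (m + (u + 1)).choose u := Nat.choose_pos (by omega)
    omega

lemma mrf_greedy_eq (t A r : ℕ) (hA : t + 1 ≤ A) (hr : r < A.choose t) :
    Nat.findGreatest (fun a => Nat.choose a (t + 1) ≤ A.choose (t + 1) + r)
      (A.choose (t + 1) + r + t + 1) = A := by
  set n := A.choose (t + 1) + r with hn
  have hCA : A.choose (t + 1) ≤ n := Nat.le_add_right _ _
  have hAn : A ≤ n + t + 1 := by
    have := choose_lb (A - (t + 1)) t
    have h2 : A - (t+1) + (t+1) = A := by omega
    rw [h2] at this
    omega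
  apply le_antisymm
  · by_contra h
    push_neg at h
    have hP : Nat.choose A (t+1) ≤ n := hCA
    -- findGreatest > A means some value > A satisfies predicate
    have hfg := Nat.findGreatest_spec (P := fun a => Nat.choose a (t + 1) ≤ n)
      (m := A) hAn hP
    have hge : A + 1 ≤ Nat.findGreatest (fun a => Nat.choose a (t + 1) ≤ n) (n + t + 1) := h
    have hmono : (A+1).choose (t+1) ≤ (Nat.findGreatest (fun a => Nat.choose a (t + 1) ≤ n) (n + t + 1)).choose (t+1) :=
      Nat.choose_le_choose _ hge
    have hlt : n < (A+1).choose (t+1) := by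
      rw [Nat.choose_succ_succ']
      omega
    omega
  · exact Nat.le_findGreatest hAn hCA

lemma mrf_eq (g : ℕ → ℕ → ℕ) (t A r : ℕ) (hA : t + 1 ≤ A) (hr : r < A.choose t) :
    macRepFold g (t + 1) (A.choose (t + 1) + r) = g A (t + 1) + macRepFold g t r := by
  have hpos : 0 < A.choose (t + 1) := Nat.choose_pos hA
  have hne : A.choose (t + 1) + r ≠ 0 := by omega
  rw [macRepFold]
  simp only [hne, if_false]
  rw [mrf_greedy_eq t A r hA hr]
  congr 1
  congr 1
  omega

lemma mrf_decomp (t n : ℕ) (hn : n ≠ 0) :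
    ∃ A r, t + 1 ≤ A ∧ r < A.choose t ∧ n = A.choose (t + 1) + r := by
  set P : ℕ → Prop := fun a => Nat.choose a (t + 1) ≤ n with hP
  set A := Nat.findGreatest P (n + t + 1) with hA
  have hwit : P (t + 1) := by simp [P, Nat.choose_self]; omega
  have hge : t + 1 ≤ A := Nat.le_findGreatest (by omega) hwit
  have hPA : P A := Nat.findGreatest_spec (m := t+1) (by omega) hwit
  have hAub : A ≤ n + t := by
    have := choose_lb (A - (t + 1)) t
    have h2 : A - (t+1) + (t+1) = A := by omega
    rw [h2] at this
    simp only [P] at hPA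
    omega
  have hnot : ¬ P (A + 1) := Nat.findGreatest_is_greatest (n := n + t + 1) (by omega) (by omega)
  simp only [P, not_le] at hnot hPA
  rw [Nat.choose_succ_succ'] at hnot
  exact ⟨A, n - A.choose (t+1), hge, by omega, by omega⟩

-- specialized versions (beta-reduced)
lemma mrfL_eq (t A r : ℕ) (hA : t + 1 ≤ A) (hr : r < A.choose t) :
    macRepFold (fun a t => Nat.choose a (t - 1)) (t + 1) (A.choose (t + 1) + r)
      = A.choose t + macRepFold (fun a t => Nat.choose a (t - 1)) t r :=
  mrf_eq _ t A r hA hr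

lemma mrfU_eq (t A r : ℕ) (hA : t + 1 ≤ A) (hr : r < A.choose t) :
    macRepFold (fun a t => Nat.choose (a - 1) t) (t + 1) (A.choose (t + 1) + r)
      = (A - 1).choose (t + 1) + macRepFold (fun a t => Nat.choose (a - 1) t) t r :=
  mrf_eq _ t A r hA hr

lemma mrfD_eq (t A r : ℕ) (hA : t + 1 ≤ A) (hr : r < A.choose t) :
    macRepFold (fun a t => if a = t then 1 else 0) (t + 1) (A.choose (t + 1) + r)
      = (if A = t + 1 then 1 else 0) + macRepFold (fun a t => if a = t then 1 else 0) t r :=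
  mrf_eq _ t A r hA hr

lemma foldU_lt : ∀ s B n, s ≤ B → n < (B + 1).choose s →
    macRepFold (fun a t => Nat.choose (a - 1) t) s n < B.choose s := by
  intro s
  induction s with
  | zero =>
    intro B n _ _
    simpa [macRepFold] using Nat.choose_pos (Nat.zero_le B)
  | succ s ih =>
    intro B n hsB hn
    by_cases h0 : n = 0
    · rw [h0, mrf_zero]
      exact Nat.choose_pos hsB
    obtain ⟨A, r, hA, hr, hdec⟩ := mrf_decomp s n h0
    have hAB : A ≤ B := by
      by_contra hc
      push_neg at hc
      have hc' : B + 1 ≤ A := hc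
      have := Nat.choose_le_choose (s + 1) hc'
      omega
    obtain ⟨A', rfl⟩ : ∃ A', A = A' + 1 := ⟨A - 1, by omega⟩
    rw [hdec, mrfU_eq s (A' + 1) r hA hr]
    have h1 : macRepFold (fun a t => Nat.choose (a - 1) t) s r < A'.choose s :=
      ih A' r (by omega) hr
    have h2 : (A' + 1).choose (s + 1) = A'.choose s + A'.choose (s + 1) :=
      Nat.choose_succ_succ' A' s
    have h3 : (A' + 1).choose (s + 1) ≤ B.choose (s + 1) := Nat.choose_le_choose _ hAB
    simp only [Nat.add_sub_cancel]
    omega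

lemma foldL_le : ∀ s A n : ℕ, n < A.choose (s + 1) →
    macRepFold (fun a t => Nat.choose a (t - 1)) (s + 1) n ≤ A.choose s := by
  intro s
  induction s with
  | zero =>
    intro A n hn
    by_cases h0 : n = 0
    · simp [h0, mrf_zero]
    obtain ⟨A', r, hA, hr, hdec⟩ := mrf_decomp 0 n h0
    have hr0 : r = 0 := by simpa using hr
    rw [hdec, hr0, mrfL_eq 0 A' 0 hA (by simpa using hr)]
    simp [mrf_zero]
  | succ s ih =>
    intro A n hn
    by_cases h0 : n = 0
    · simp [h0, mrf_zero]
    obtain ⟨A', r, hA, hr, hdec⟩ := mrf_decomp (s + 1) n h0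
    have hAA : A' < A := by
      by_contra hc
      push_neg at hc
      have := Nat.choose_le_choose (s + 1 + 1) hc
      omega
    rw [hdec, mrfL_eq (s + 1) A' r hA hr]
    have h1 := ih A' r hr
    have h2 : (A' + 1).choose (s + 1) = A'.choose s + A'.choose (s + 1) :=
      Nat.choose_succ_succ' A' s
    have h3 : (A' + 1).choose (s + 1) ≤ A.choose (s + 1) := Nat.choose_le_choose _ hAA
    omega

lemma foldL_mono : ∀ s n n', n ≤ n' →
    macRepFold (fun a t => Nat.choose a (t - 1)) s n
      ≤ macRepFold (fun a t => Nat.choose a (t - 1)) s n' := by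
  intro s
  induction s with
  | zero => intro n n' _; simp [macRepFold]
  | succ s ih =>
    intro n n' hnn
    by_cases h0 : n = 0
    · simp [h0, mrf_zero]
    have h0' : n' ≠ 0 := by omega
    obtain ⟨A, r, hA, hr, hdec⟩ := mrf_decomp s n h0
    obtain ⟨A', r', hA', hr', hdec'⟩ := mrf_decomp s n' h0'
    have hAA : A ≤ A' := by
      by_contra hc
      push_neg at hc
      have h2 : (A' + 1).choose (s + 1) = A'.choose s + A'.choose (s + 1) :=
        Nat.choose_succ_succ' A' s
      have h3 : A' + 1 ≤ A := hc
      have h4 := Nat.choose_le_choose (s + 1) h3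
      omega
    rcases eq_or_lt_of_le hAA with heq | hlt
    · subst heq
      have hrr : r ≤ r' := by omega
      rw [hdec, hdec', mrfL_eq s A r hA hr, mrfL_eq s A r' hA hr']
      have := ih r r' hrr
      omega
    · have hb : n < (A + 1).choose (s + 1) := by
        have h2 : (A + 1).choose (s + 1) = A.choose s + A.choose (s + 1) :=
          Nat.choose_succ_succ' A s
        omega
      have h1 := foldL_le s (A + 1) n hb
      have h2 : (A + 1).choose s ≤ A'.choose s := Nat.choose_le_choose _ hlt
      rw [hdec', mrfL_eq s A' r' hA' hr']
      omega

lemma fold_diag : ∀ s n : ℕ, n ≤ s →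
    macRepFold (fun a t => Nat.choose (a - 1) t) s n = 0 ∧
    macRepFold (fun a t => if a = t then 1 else 0) s n = n := by
  intro s
  induction s with
  | zero => intro n hn; interval_cases n; simp [mrf_zero]
  | succ s ih =>
    intro n hn
    by_cases h0 : n = 0
    · simp [h0, mrf_zero]
    have hss : (s + 1).choose s = s + 1 := by
      rw [← Nat.choose_symm (Nat.le_succ s)]
      simp [Nat.choose_one_right]
    have hrlt : n - 1 < (s + 1).choose s := by omega
    have hdec : n = (s + 1).choose (s + 1) + (n - 1) := by
      simp [Nat.choose_self]; omega
    obtain ⟨ih1, ih2⟩ := ih (n - 1) (by omega)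
    constructor
    · rw [hdec, mrfU_eq s (s + 1) (n - 1) le_rfl hrlt, ih1]
      simp [Nat.choose_eq_zero_of_lt]
    · rw [hdec, mrfD_eq s (s + 1) (n - 1) le_rfl hrlt, ih2]
      simp

lemma fold_identity : ∀ s n : ℕ, (n = 0 ∨ 1 ≤ s) →
    macRepFold (fun a t => Nat.choose (a - 1) t) s n +
    macRepFold (fun a t => if a = t then 1 else 0) s n +
    macRepFold (fun a t => Nat.choose a (t - 1)) s
      (macRepFold (fun a t => Nat.choose (a - 1) t) s n) = n := by
  intro s
  induction s with
  | zero =>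
    intro n hn
    rcases hn with h | h
    · simp [h, mrf_zero]
    · omega
  | succ s ih =>
    intro n _
    by_cases h0 : n = 0
    · simp [h0, mrf_zero]
    obtain ⟨A, r, hA, hr, hdec⟩ := mrf_decomp s n h0
    by_cases hAs : A = s + 1
    · subst hAs
      have hss : (s + 1).choose s = s + 1 := by
        rw [← Nat.choose_symm (Nat.le_succ s)]
        simp [Nat.choose_one_right]
      have hn1 : n ≤ s + 1 := by
        have : (s + 1).choose (s + 1) = 1 := Nat.choose_self _
        omega
      obtain ⟨d1, d2⟩ := fold_diag (s + 1) n hn1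
      rw [d1, d2, mrf_zero]
      omega
    · obtain ⟨B, rfl⟩ : ∃ B, A = B + 1 := ⟨A - 1, by omega⟩
      have hB : s + 1 ≤ B := by omega
      set x := macRepFold (fun a t => Nat.choose (a - 1) t) s r with hx
      have hxlt : x < B.choose s := foldU_lt s B r (by omega) hr
      have hU : macRepFold (fun a t => Nat.choose (a - 1) t) (s + 1) n
          = B.choose (s + 1) + x := by
        rw [hdec, mrfU_eq s (B + 1) r hA hr]
        simp [hx]
      have hD : macRepFold (fun a t => if a = t then 1 else 0) (s + 1) n
          = macRepFold (fun a t => if a = t then 1 else 0) s r := by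
        rw [hdec, mrfD_eq s (B + 1) r hA hr]
        simp [hAs]
        omega
      have hL : macRepFold (fun a t => Nat.choose a (t - 1)) (s + 1) (B.choose (s + 1) + x)
          = B.choose s + macRepFold (fun a t => Nat.choose a (t - 1)) s x :=
        mrfL_eq s B x hB hxlt
      have hside : r = 0 ∨ 1 ≤ s := by
        rcases Nat.eq_zero_or_pos s with hs0 | hs1
        · left; subst hs0; simpa using hr
        · right; exact hs1
      have hih := ih r hside
      rw [← hx] at hih
      have hpas : (B + 1).choose (s + 1) = B.choose s + B.choose (s + 1) :=
        Nat.choose_succ_succ' B s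
      rw [hU, hD, hL]
      omega

lemma fold_key : ∀ s n : ℕ, (n = 0 ∨ 1 ≤ s) →
    n ≤ macRepFold (fun a t => Nat.choose (a - 1) t) s n +
        macRepFold (fun a t => Nat.choose a (t - 1)) s
          (macRepFold (fun a t => Nat.choose (a - 1) t) s n + 1) := by
  intro s
  induction s with
  | zero =>
    intro n hn
    rcases hn with h | h
    · omega
    · omega
  | succ s ih =>
    intro n _
    by_cases h0 : n = 0
    · omega
    obtain ⟨A, r, hA, hr, hdec⟩ := mrf_decomp s n h0
    by_cases hAs : A = s + 1
    · subst hAs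
      have hss : (s + 1).choose s = s + 1 := by
        rw [← Nat.choose_symm (Nat.le_succ s)]
        simp [Nat.choose_one_right]
      have hn1 : n ≤ s + 1 := by
        have : (s + 1).choose (s + 1) = 1 := Nat.choose_self _
        omega
      obtain ⟨d1, _⟩ := fold_diag (s + 1) n hn1
      rw [d1]
      have hL1 : macRepFold (fun a t => Nat.choose a (t - 1)) (s + 1) 1
          = (s + 1).choose s := by
        simpa [mrf_zero, Nat.choose_self] using mrfL_eq s (s + 1) 0 le_rfl (by omega)
      rw [hL1]
      omega
    · obtain ⟨B, rfl⟩ : ∃ B, A = B + 1 := ⟨A - 1, by omega⟩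
      have hB : s + 1 ≤ B := by omega
      set x := macRepFold (fun a t => Nat.choose (a - 1) t) s r with hx
      have hxlt : x < B.choose s := foldU_lt s B r (by omega) hr
      have hU : macRepFold (fun a t => Nat.choose (a - 1) t) (s + 1) n
          = B.choose (s + 1) + x := by
        rw [hdec, mrfU_eq s (B + 1) r hA hr]
        simp [hx]
      have hside : r = 0 ∨ 1 ≤ s := by
        rcases Nat.eq_zero_or_pos s with hs0 | hs1
        · left; subst hs0; simpa using hr
        · right; exact hs1
      have hih := ih r hside
      rw [← hx] at hih
      have hpas : (B + 1).choose (s + 1) = B.choose s + B.choose (s + 1) :=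
        Nat.choose_succ_succ' B s
      rw [hU]
      by_cases hcase : x + 1 < B.choose s
      · have hL : macRepFold (fun a t => Nat.choose a (t - 1)) (s + 1)
            (B.choose (s + 1) + x + 1)
            = B.choose s + macRepFold (fun a t => Nat.choose a (t - 1)) s (x + 1) := by
          have : B.choose (s + 1) + x + 1 = B.choose (s + 1) + (x + 1) := by omega
          rw [this, mrfL_eq s B (x + 1) hB hcase]
        rw [hL]
        omega
      · have hxeq : x + 1 = B.choose s := by omega
        have heq2 : B.choose (s + 1) + x + 1 = (B + 1).choose (s + 1) + 0 := by omega
        have hL : macRepFold (fun a t => Nat.choose a (t - 1)) (s + 1)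
            (B.choose (s + 1) + x + 1) = (B + 1).choose s := by
          rw [heq2, mrfL_eq s (B + 1) 0 (by omega) (Nat.choose_pos (by omega))]
          simp [mrf_zero]
        rw [hL]
        -- need : n = (B+1).choose (s+1) + r ≤ B.choose (s+1) + x + (B+1).choose s
        -- i.e. r + 1 ≤ (B+1).choose s
        rcases Nat.eq_zero_or_pos s with hs0 | hs1
        · subst hs0
          have hr0 : r = 0 := by simpa using hr
          have : (B + 1).choose 0 = 1 := Nat.choose_zero_right _
          omega
        · obtain ⟨u, rfl⟩ : ∃ u, s = u + 1 := ⟨s - 1, by omega⟩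
          have hLx : macRepFold (fun a t => Nat.choose a (t - 1)) (u + 1) (x + 1)
              = B.choose u := by
            have hxe : x + 1 = B.choose (u + 1) + 0 := by omega
            rw [hxe, mrfL_eq u B 0 (by omega) (Nat.choose_pos (by omega))]
            simp [mrf_zero]
          rw [hLx] at hih
          have hpas2 : (B + 1).choose (u + 1) = B.choose u + B.choose (u + 1) :=
            Nat.choose_succ_succ' B u
          omega


/-- The combinatorial shadow function `∂_k(n) = Σ_t C(a_t, t - 1)`. -/
def partialLower (k n : ℕ) : ℕ := macRepFold (fun a t => Nat.choose a (t - 1)) (k + 1) n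

/-- The combinatorial shadow function `∂^k(n) = Σ_t C(a_t - 1, t)`. -/
def partialUpper (k n : ℕ) : ℕ := macRepFold (fun a t => Nat.choose (a - 1) t) (k + 1) n

/-- The error function `δ_k(n) = #{t : a_t = t}`. -/
def deltaErr (k n : ℕ) : ℕ := macRepFold (fun a t => if a = t then 1 else 0) (k + 1) n

/-- The function `d^k(n) = Σ_t C(a_t + 1, t)`. -/
def dUpper (k n : ℕ) : ℕ := macRepFold (fun a t => Nat.choose (a + 1) t) (k + 1) n

/-- Theorem 1.3(a): for `0 ≤ ε ≤ δ_k(n+m)`,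
`∂_k(n) ≤ m − ε` if and only if `n ≤ ∂^k(n+m)`. -/
theorem partialLower_le_iff_le_partialUpper (k n m : ℕ) (ε : ℤ)
    (hε0 : 0 ≤ ε) (hε : ε ≤ (deltaErr k (n + m) : ℤ)) :
    (partialLower k n : ℤ) ≤ (m : ℤ) - ε ↔ n ≤ partialUpper k (n + m) := by
  have hid := fold_identity (k + 1) (n + m) (Or.inr (by omega))
  have hkey := fold_key (k + 1) (n + m) (Or.inr (by omega))
  set U := macRepFold (fun a t => Nat.choose (a - 1) t) (k + 1) (n + m) with hUdef
  have hPU : partialUpper k (n + m) = U := rfl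
  have hPD : (deltaErr k (n + m) : ℕ)
      = macRepFold (fun a t => if a = t then 1 else 0) (k + 1) (n + m) := rfl
  have hPL : partialLower k n = macRepFold (fun a t => Nat.choose a (t - 1)) (k + 1) n := rfl
  constructor
  · intro h
    rw [hPU]
    by_contra hcon
    push_neg at hcon
    have hU1 : U + 1 ≤ n := hcon
    have hmono := foldL_mono (k + 1) (U + 1) n hU1
    -- hkey : n + m ≤ U + foldL (U+1)
    have hnat : partialLower k n ≤ m := by
      have : (partialLower k n : ℤ) ≤ (m : ℤ) := le_trans h (by omega)
      exact_mod_cast this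
    rw [hPL] at hnat
    omega
  · intro h
    rw [hPU] at h
    have hmono := foldL_mono (k + 1) n U h
    -- hid : U + D + foldL U = n + m
    have key : (partialLower k n : ℤ) + (n : ℤ) + (deltaErr k (n + m) : ℤ) ≤ ((n + m : ℕ) : ℤ) := by
      rw [hPL]
      push_cast
      rw [hPD]
      push_cast
      omega
    push_cast at key
    omega
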